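/- Let t ≥ 1 and let 𝓕 be a family of subsets of T = {1,…,t}. Then there exist a finite set U with |U| ≤ C(t, ⌊t/2⌋) and subsets A₁, A₂, …, A_t of U such that for every nonempty X ⊆ T: X contains no member of 𝓕 if and only if ⋂_{i∈X} A_i ≠ ∅. -/

import Mathlib

/-- Let `t ≥ 1` and let `𝓕` be a family of subsets of `T = {1, …, t}`. Then there exist a
finite set `U` with `|U| ≤ C(t, ⌊t/2⌋)` and subsets `A₁, …, A_t` of `U` such that for every
nonempty `X ⊆ T`: `X` contains no member of `𝓕` iff `⋂_{i ∈ X} A_i ≠ ∅`. -/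
theorem exists_sets_inter_nonempty_iff_no_member
    (t : ℕ) (ht : 1 ≤ t) (𝓕 : Finset (Finset (Fin t))) :
    ∃ (U : Finset ℕ) (A : Fin t → Finset ℕ),
      U.card ≤ t.choose (t / 2) ∧ (∀ i, A i ⊆ U) ∧
      ∀ X : Finset (Fin t), X.Nonempty →
        ((¬ ∃ F ∈ 𝓕, F ⊆ X) ↔ ∃ u, ∀ i ∈ X, u ∈ A i) := by
  classical
  -- S : sets containing no member of 𝓕
  set S : Finset (Finset (Fin t)) :=
    Finset.univ.filter (fun Y => ¬ ∃ F ∈ 𝓕, F ⊆ Y) with hS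
  -- G : maximal elements of S
  set G : Finset (Finset (Fin t)) :=
    S.filter (fun Y => ∀ Z ∈ S, Y ⊆ Z → Y = Z) with hG
  have hmemS : ∀ Y, Y ∈ S ↔ ¬ ∃ F ∈ 𝓕, F ⊆ Y := by
    intro Y; simp [hS]
  have hGanti : IsAntichain (· ⊆ ·) (G : Set (Finset (Fin t))) := by
    intro Y hY Z hZ hne hsub
    simp only [hG, Finset.coe_filter, Set.mem_setOf_eq] at hY hZ
    exact hne (hY.2 Z hZ.1 hsub)
  have hcard : G.card ≤ t.choose (t / 2) := by
    have := IsAntichain.sperner hGanti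
    simpa using this
  -- key : P X ↔ ∃ Y ∈ G, X ⊆ Y
  have key : ∀ X : Finset (Fin t), (¬ ∃ F ∈ 𝓕, F ⊆ X) ↔ ∃ Y ∈ G, X ⊆ Y := by
    intro X
    constructor
    · intro hX
      have hXS : X ∈ S := (hmemS X).2 hX
      have hne : (S.filter (fun Z => X ⊆ Z)).Nonempty :=
        ⟨X, Finset.mem_filter.2 ⟨hXS, le_refl X⟩⟩
      obtain ⟨Y, hY, hmax⟩ := (S.filter (fun Z => X ⊆ Z)).exists_max_image Finset.card hne
      rw [Finset.mem_filter] at hY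
      refine ⟨Y, ?_, hY.2⟩
      rw [hG, Finset.mem_filter]
      refine ⟨hY.1, fun Z hZ hYZ => ?_⟩
      have hZ' : Z ∈ S.filter (fun Z => X ⊆ Z) :=
        Finset.mem_filter.2 ⟨hZ, hY.2.trans hYZ⟩
      exact Finset.eq_of_subset_of_card_le hYZ (hmax Z hZ')
    · rintro ⟨Y, hY, hXY⟩ ⟨F, hF, hFX⟩
      have hYS : Y ∈ S := (Finset.mem_filter.1 hY).1
      exact ((hmemS Y).1 hYS) ⟨F, hF, hFX.trans hXY⟩
  refine ⟨G.image Encodable.encode,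
    fun i => (G.filter (fun Y => i ∈ Y)).image Encodable.encode, ?_, ?_, ?_⟩
  · exact (Finset.card_image_le).trans hcard
  · intro i
    exact Finset.image_subset_image (Finset.filter_subset _ _)
  · intro X hXne
    rw [key X]
    constructor
    · rintro ⟨Y, hY, hXY⟩
      refine ⟨Encodable.encode Y, fun i hi => ?_⟩
      exact Finset.mem_image.2 ⟨Y, Finset.mem_filter.2 ⟨hY, hXY hi⟩, rfl⟩
    · rintro ⟨u, hu⟩
      obtain ⟨i₀, hi₀⟩ := hXne
      obtain ⟨Y, hY, hYu⟩ := Finset.mem_image.1 (hu i₀ hi₀)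
      refine ⟨Y, (Finset.mem_filter.1 hY).1, fun i hi => ?_⟩
      obtain ⟨Y', hY', hY'u⟩ := Finset.mem_image.1 (hu i hi)
      have : Y' = Y := Encodable.encode_injective (hY'u.trans hYu.symm)
      rw [← this]
      exact (Finset.mem_filter.1 hY').2
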